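/- Let V be a real inner product space and let J : V → V be a linear map with J ∘ J = −id and ⟨Jx, Jy⟩ = ⟨x, y⟩ for all x, y ∈ V; define ω(x,y) := ⟨Jx, y⟩. Let ρ : ℝ² → ℝ² be the rotation with ρ(e₁) = e₂ and ρ(e₂) = −e₁. For a real-linear map A : ℝ² → V define ∂̄A := (1/2)(A + J ∘ A ∘ ρ). Then (1/2)(‖Ae₁‖² + ‖Ae₂‖²) = ‖(∂̄A)e₁‖² + ‖(∂̄A)e₂‖² + ω(Ae₁, Ae₂). -/

import Mathlib

noncomputable section

/-- The rotation `ρ : ℝ² → ℝ²` with `ρ(e₁) = e₂` and `ρ(e₂) = −e₁`. -/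
def rot : (ℝ × ℝ) →ₗ[ℝ] (ℝ × ℝ) where
  toFun p := (-p.2, p.1)
  map_add' p q := by ext <;> simp <;> ring
  map_smul' c p := by ext <;> simp [mul_comm]

/-- The Cauchy–Riemann operator `∂̄A := (1/2)(A + J ∘ A ∘ ρ)` of a real-linear map
`A : ℝ² → V` with respect to a complex structure `J` on `V`. -/
def dbar {V : Type*} [AddCommGroup V] [Module ℝ V]
    (J : V →ₗ[ℝ] V) (A : (ℝ × ℝ) →ₗ[ℝ] V) : (ℝ × ℝ) →ₗ[ℝ] V :=
  (1 / 2 : ℝ) • (A + J ∘ₗ A ∘ₗ rot)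

/-- **Pointwise energy identity for compatible almost complex structures** (Lemma 6.1
of Solomon–Verbitsky, following Lemma 2.2.1 of McDuff–Salamon). If `J` is an
orthogonal complex structure on a real inner product space `V`, `ω(x,y) = ⟨Jx, y⟩`,
and `A : ℝ² → V` is real-linear, then
`(1/2)(‖Ae₁‖² + ‖Ae₂‖²) = ‖(∂̄A)e₁‖² + ‖(∂̄A)e₂‖² + ω(Ae₁, Ae₂)`. -/
theorem energy_identity
    {V : Type*} [NormedAddCommGroup V] [InnerProductSpace ℝ V]
    (J : V →ₗ[ℝ] V)
    (hJ2 : ∀ x, J (J x) = -x)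
    (hJinner : ∀ x y : V, (inner ℝ (J x) (J y) : ℝ) = inner ℝ x y)
    (A : (ℝ × ℝ) →ₗ[ℝ] V) :
    (1 / 2 : ℝ) * (‖A (1, 0)‖ ^ 2 + ‖A (0, 1)‖ ^ 2)
      = ‖dbar J A (1, 0)‖ ^ 2 + ‖dbar J A (0, 1)‖ ^ 2
        + (inner ℝ (J (A (1, 0))) (A (0, 1)) : ℝ) := by
  set u := A (1, 0) with hu
  set v := A (0, 1) with hv
  have h1 : dbar J A (1, 0) = (1 / 2 : ℝ) • (u + J v) := by
    simp [dbar, rot, hu, hv]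
  have h2 : dbar J A (0, 1) = (1 / 2 : ℝ) • (v - J u) := by
    have : A (-1, 0) = -u := by
      have : ((-1 : ℝ), (0 : ℝ)) = -((1 : ℝ), (0 : ℝ)) := by simp [Prod.ext_iff]
      rw [this, map_neg]
    simp [dbar, rot, hu, hv, this, sub_eq_add_neg]
  have hJu : ‖J u‖ ^ 2 = ‖u‖ ^ 2 := by
    have := hJinner u u
    rw [real_inner_self_eq_norm_sq, real_inner_self_eq_norm_sq] at this
    linarith
  have hJv : ‖J v‖ ^ 2 = ‖v‖ ^ 2 := by
    have := hJinner v v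
    rw [real_inner_self_eq_norm_sq, real_inner_self_eq_norm_sq] at this
    linarith
  have hcross : (inner ℝ u (J v) : ℝ) = -(inner ℝ (J u) v : ℝ) := by
    have := hJinner u (J v)
    rw [hJ2, inner_neg_right] at this
    linarith
  rw [h1, h2, norm_smul, norm_smul, mul_pow, mul_pow,
    norm_add_sq_real, norm_sub_sq_real, hJu, hJv,
    real_inner_comm v (J u)]
  have : (inner ℝ u (J v) : ℝ) = -(inner ℝ (J u) v : ℝ) := hcross
  simp only [this]
  norm_num
  linarith [real_inner_comm v (J u)]

end
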